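/- For every λ ∈ ℝ \ {0} and μ ∈ ℝ, the map x ↦ π_{λ,μ}(x) is a representation of the Engel group: for all x, y ∈ ℝ⁴ and all h : ℝ → ℂ, π_{λ,μ}(x ∘ y)h = π_{λ,μ}(x)(π_{λ,μ}(y)h), and π_{λ,μ}(0,0,0,0)h = h. -/
import Mathlib


noncomputable section

/-- The Engel product on `ℝ⁴`. -/
def engelMul (x y : ℝ × ℝ × ℝ × ℝ) : ℝ × ℝ × ℝ × ℝ :=
  (x.1 + y.1, x.2.1 + y.2.1, x.2.2.1 + y.2.2.1 - x.1 * y.2.1,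
   x.2.2.2 + y.2.2.2 + (1 / 2) * x.1 ^ 2 * y.2.1 - x.1 * y.2.2.1)

/-- The action of the representation `π_{λ,μ}(x)` on a function `h : ℝ → ℂ`:
`(π_{λ,μ}(x)h)(u) = exp(i(−(μ/(2λ))x₂ + λx₄ − λx₃u + (λ/2)x₂u²)) · h(u + x₁)`. -/
def piAct (lam mu : ℝ) (x : ℝ × ℝ × ℝ × ℝ) (h : ℝ → ℂ) (u : ℝ) : ℂ :=
  Complex.exp (Complex.I *
    ((-(mu / (2 * lam)) * x.2.1 + lam * x.2.2.2 - lam * x.2.2.1 * u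
      + (lam / 2) * x.2.1 * u ^ 2 : ℝ) : ℂ)) * h (u + x.1)

/-- For every `λ ≠ 0` and `μ ∈ ℝ`, the map `x ↦ π_{λ,μ}(x)` is a representation of the
Engel group: `π_{λ,μ}(x ∘ y)h = π_{λ,μ}(x)(π_{λ,μ}(y)h)` and `π_{λ,μ}(0)h = h`. -/
theorem engel_pi_representation :
    ∀ lam : ℝ, lam ≠ 0 → ∀ mu : ℝ,
      (∀ x y : ℝ × ℝ × ℝ × ℝ, ∀ h : ℝ → ℂ,
        piAct lam mu (engelMul x y) h = piAct lam mu x (piAct lam mu y h)) ∧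
      (∀ h : ℝ → ℂ, piAct lam mu ((0 : ℝ), (0 : ℝ), (0 : ℝ), (0 : ℝ)) h = h) := by
  intro lam hlam mu
  constructor
  · intro x y h
    funext u
    simp only [piAct, engelMul]
    rw [← mul_assoc, ← Complex.exp_add, ← mul_add, ← Complex.ofReal_add,
      show u + x.1 + y.1 = u + (x.1 + y.1) by ring]
    congr 2
    push_cast
    ring
  · intro h
    funext u
    simp [piAct]
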